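/- Let g : (a,b) → ℝ have finite one-sided derivatives at every point. If x < z < y are points of (a,b) with g(z) > L(z), where L is the affine function through (x,g(x)) and (y,g(y)), then setting α = (g(z)−g(x))/(z−x) and β = (g(y)−g(z))/(y−z), there exist u ∈ (x,z) with g'₊(u) ≥ α and v ∈ (z,y) with g'₋(v) ≤ β, and moreover α > β. -/

import Mathlib

open Set Filter Topology

/-- If `g` has right derivative `d` at `c` and the slopes from `c` to points in `(c, w]`
are all `≥ r`, then `d ≥ r`. -/
lemma lemF4_right_slope_le (g : ℝ → ℝ) (d c w r : ℝ) (hcw : c < w)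
    (hd : HasDerivWithinAt g d (Set.Ioi c) c)
    (hmin : ∀ t ∈ Set.Ioc c w, r ≤ (g t - g c) / (t - c)) : r ≤ d := by
  have h := hasDerivWithinAt_iff_tendsto_slope.1 hd
  have hs : Set.Ioi c \ {c} = Set.Ioi c := by
    apply Set.diff_singleton_eq_self; simp
  rw [hs] at h
  refine ge_of_tendsto h ?_
  filter_upwards [Ioc_mem_nhdsGT_of_mem (Set.left_mem_Ico.2 hcw)] with t ht
  rw [slope_def_field]
  exact hmin t ht

/-- Key lemma: a point in `(p,q)` whose right derivative is at least the chord slope. -/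
lemma lemF4_key (g gr : ℝ → ℝ) (p q : ℝ) (hpq : p < q)
    (hc : ContinuousOn g (Set.Icc p q))
    (hgr : ∀ t ∈ Set.Ioo p q, HasDerivWithinAt g (gr t) (Set.Ioi t) t) :
    ∃ u ∈ Set.Ioo p q, (g q - g p) / (q - p) ≤ gr u := by
  set α : ℝ := (g q - g p) / (q - p) with hα
  set φ : ℝ → ℝ := fun t => g t - g p - α * (t - p) with hφ
  have hqp : (0:ℝ) < q - p := by linarith
  have hφc : ContinuousOn φ (Set.Icc p q) :=
    (hc.sub continuousOn_const).sub
      ((continuous_const.mul (continuous_id.sub continuous_const)).continuousOn)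
  have hφp : φ p = 0 := by simp [hφ]
  have hφq : φ q = 0 := by
    simp only [hφ, hα]
    field_simp
    ring
  clear_value α φ
  suffices h : ∃ c ∈ Set.Ioo p q, ∃ w, c < w ∧ w ≤ q ∧ ∀ t ∈ Set.Ioc c w, φ c ≤ φ t by
    obtain ⟨c, hcmem, w, h1, h2, h3⟩ := h
    refine ⟨c, hcmem, ?_⟩
    refine lemF4_right_slope_le g (gr c) c w α h1 (hgr c hcmem) ?_
    intro t ht
    have h4 := h3 t ht
    have htc : (0:ℝ) < t - c := by linarith [ht.1]
    rw [le_div_iff₀ htc]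
    simp only [hφ] at h4
    nlinarith
  -- find such a point
  obtain ⟨c, hcmem, hcmin⟩ :=
    isCompact_Icc.exists_isMinOn (Set.nonempty_Icc.2 hpq.le) hφc
  by_cases hcint : c ∈ Set.Ioo p q
  · refine ⟨c, hcint, q, hcint.2, le_refl _, fun t ht => ?_⟩
    exact hcmin ⟨by linarith [hcint.1, ht.1], ht.2⟩
  · -- min attained at an endpoint, so φ ≥ 0 on [p,q]
    have hφc0 : φ c = 0 := by
      rcases hcmem with ⟨h1, h2⟩
      rcases eq_or_lt_of_le h1 with h | h
      · rw [← h, hφp]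
      rcases eq_or_lt_of_le h2 with h' | h'
      · rw [h', hφq]
      · exact absurd ⟨h, h'⟩ hcint
    have hφnn : ∀ t ∈ Set.Icc p q, 0 ≤ φ t := fun t ht => hφc0 ▸ hcmin ht
    set w : ℝ := (p + q) / 2 with hwdef
    have hw : w ∈ Set.Ioo p q := ⟨by rw [hwdef]; linarith, by rw [hwdef]; linarith⟩
    clear_value w
    by_cases hφw : φ w ≤ 0
    · refine ⟨w, hw, q, hw.2, le_refl _, fun t ht => ?_⟩
      have := hφnn t ⟨by linarith [hw.1, ht.1], ht.2⟩
      linarith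
    · push_neg at hφw
      set S : Set ℝ := {t ∈ Set.Icc p w | φ t ≤ φ w / 2} with hS
      have hSne : S.Nonempty := ⟨p, ⟨Set.left_mem_Icc.2 hw.1.le, by rw [hφp]; exact (half_pos hφw).le⟩⟩
      have hSbdd : BddAbove S := ⟨w, fun t ht => ht.1.2⟩
      have hSclosed : IsClosed S := by
        have : S = Set.Icc p w ∩ φ ⁻¹' (Set.Iic (φ w / 2)) := rfl
        rw [this]
        apply ContinuousOn.preimage_isClosed_of_isClosed
          (hφc.mono (Set.Icc_subset_Icc le_rfl hw.2.le)) isClosed_Icc isClosed_Iic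
      set c' : ℝ := sSup S with hc'
      have hc'S : c' ∈ S := hSclosed.csSup_mem hSne hSbdd
      have hcle : φ c' ≤ φ w / 2 := hc'S.2
      have hpc' : p ≤ c' := hc'S.1.1
      have hc'w : c' < w := by
        rcases eq_or_lt_of_le hc'S.1.2 with h | h
        · exfalso; rw [h] at hcle; linarith
        · exact h
      have hbig : ∀ t ∈ Set.Ioc c' w, φ w / 2 < φ t := by
        intro t ht
        by_contra hcon
        push_neg at hcon
        have : t ∈ S := ⟨⟨by linarith [ht.1], ht.2⟩, hcon⟩
        exact absurd (le_csSup hSbdd this) (not_le.2 ht.1)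
      have hc'p : p < c' := by
        rcases eq_or_lt_of_le hpc' with h | h
        · exfalso
          -- contradiction with continuity at p
          have hcw : ContinuousWithinAt φ (Set.Ioc p w) p := by
            apply (hφc p (Set.left_mem_Icc.2 hpq.le)).mono
            exact fun t ht => ⟨ht.1.le, le_trans ht.2 hw.2.le⟩
          have hne : (𝓝[Set.Ioc p w] p).NeBot := by
            rw [← mem_closure_iff_nhdsWithin_neBot, closure_Ioc (ne_of_lt hw.1)]
            exact Set.left_mem_Icc.2 hw.1.le
          have hev : ∀ᶠ t in 𝓝[Set.Ioc p w] p, φ w / 2 ≤ φ t := by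
            filter_upwards [eventually_mem_nhdsWithin] with t ht
            exact (hbig t (by rwa [← h])).le
          have := ge_of_tendsto hcw hev
          rw [hφp] at this
          linarith
        · exact h
      refine ⟨c', ⟨hc'p, hc'w.trans hw.2⟩, w, hc'w, hw.2.le, fun t ht => ?_⟩
      exact le_trans hcle (hbig t ht).le

theorem lemF4_step (a b : ℝ) (g gl gr : ℝ → ℝ)
    (hgl : ∀ t ∈ Set.Ioo a b, HasDerivWithinAt g (gl t) (Set.Iio t) t)
    (hgr : ∀ t ∈ Set.Ioo a b, HasDerivWithinAt g (gr t) (Set.Ioi t) t)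
    (x z y : ℝ) (hx : x ∈ Set.Ioo a b) (hz : z ∈ Set.Ioo a b) (hy : y ∈ Set.Ioo a b)
    (hxz : x < z) (hzy : z < y)
    (hchord : g z > g x + (g y - g x) * (z - x) / (y - x)) :
    (g z - g x) / (z - x) > (g y - g z) / (y - z) ∧
    (∃ u ∈ Set.Ioo x z, gr u ≥ (g z - g x) / (z - x)) ∧
    (∃ v ∈ Set.Ioo z y, gl v ≤ (g y - g z) / (y - z)) := by
  have hcont : ∀ t ∈ Set.Ioo a b, ContinuousAt g t := by
    intro t ht
    exact continuousAt_iff_continuous_left'_right'.2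
      ⟨(hgl t ht).continuousWithinAt, (hgr t ht).continuousWithinAt⟩
  have hxy : x < y := hxz.trans hzy
  have hyx : (0:ℝ) < y - x := by linarith
  constructor
  · -- α > β
    rw [gt_iff_lt, div_lt_div_iff₀ (by linarith) (by linarith)]
    have hD : (g y - g x) * (z - x) = ((g y - g x) * (z - x) / (y - x)) * (y - x) := by
      field_simp
    nlinarith [hchord, hyx]
  constructor
  · -- right derivative point in (x, z)
    obtain ⟨u, hu, hu2⟩ := lemF4_key g gr x z hxz
      (fun t ht => (hcont t ⟨lt_of_lt_of_le hx.1 ht.1, lt_of_le_of_lt ht.2 hz.2⟩).continuousWithinAt)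
      (fun t ht => hgr t ⟨hx.1.trans ht.1, ht.2.trans hz.2⟩)
    exact ⟨u, hu, hu2⟩
  · -- left derivative point in (z, y): reflect
    set G : ℝ → ℝ := fun t => g (-t) with hG
    have hGr : ∀ t ∈ Set.Ioo (-y) (-z), HasDerivWithinAt G (-(gl (-t))) (Set.Ioi t) t := by
      intro t ht
      have htmem : -t ∈ Set.Ioo a b := ⟨lt_of_lt_of_le hz.1 (by linarith [ht.2]),
        lt_of_le_of_lt (by linarith [ht.1]) hy.2⟩
      have h1 : HasDerivWithinAt g (gl (-t)) (Set.Iio (-t)) (-t) := hgl (-t) htmem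
      have h2 : HasDerivWithinAt (fun s : ℝ => -s) (-1) (Set.Ioi t) t :=
        (hasDerivAt_neg t).hasDerivWithinAt
      have h3 : Set.MapsTo (fun s : ℝ => -s) (Set.Ioi t) (Set.Iio (-t)) :=
        fun s hs => by simp only [Set.mem_Iio]; exact neg_lt_neg hs
      have := HasDerivWithinAt.comp t h1 h2 h3
      rw [show -(gl (-t)) = gl (-t) * -1 by ring]
      exact this
    have hGc : ContinuousOn G (Set.Icc (-y) (-z)) := by
      intro t ht
      have htmem : -t ∈ Set.Ioo a b := ⟨lt_of_lt_of_le hz.1 (by linarith [ht.2]),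
        lt_of_le_of_lt (by linarith [ht.1]) hy.2⟩
      exact ((hcont (-t) htmem).comp (continuousAt_neg)).continuousWithinAt
    obtain ⟨u, hu, hu2⟩ := lemF4_key G (fun t => -(gl (-t))) (-y) (-z) (by linarith) hGc hGr
    refine ⟨-u, ⟨by linarith [hu.2], by linarith [hu.1]⟩, ?_⟩
    have hnum : G (-z) - G (-y) = g z - g y := by simp [hG]
    rw [hnum] at hu2
    have : (g z - g y) / (-z - -y) = -((g y - g z) / (y - z)) := by
      rw [neg_div']
      congr 1 <;> ring
    rw [this] at hu2
    linarith
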